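/- Let p ≥ 3 be an integer and let G be a finite connected bipartite simple graph with parts A and B, so that every edge of G joins a vertex of A to a vertex of B, and assume no vertex of G has valency larger than p. Let m be the cardinality of B and let r be the number of endpoints of G lying in B. Then (p − 1)²·r ≤ p(p − 2)·m + p, i.e., r ≤ (p(p−2)/(p−1)²)·(m + 1/(p−2)). -/
import Mathlib

open Finset

/-- In a connected graph, the number of vertices is at most the number of edges plus one. -/
theorem aux_conn_card_le {V : Type*} [Fintype V] [DecidableEq V]
    (G : SimpleGraph V) [DecidableRel G.Adj] (hconn : G.Connected) :
    Fintype.card V ≤ G.edgeFinset.card + 1 := by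
  classical
  obtain ⟨u⟩ := hconn.nonempty
  have key : ∀ v : V, ∃ w, v ≠ u → G.Adj v w ∧ G.dist w u < G.dist v u := by
    intro v
    by_cases hv : v = u
    · exact ⟨v, fun h => absurd hv h⟩
    · obtain ⟨p, hp⟩ := hconn.exists_walk_length_eq_dist v u
      cases p with
      | nil => exact absurd rfl hv
      | @cons _ b _ h q =>
        refine ⟨b, fun _ => ⟨h, ?_⟩⟩
        have h1 : G.dist b u ≤ q.length := SimpleGraph.dist_le q
        have h2 : q.length + 1 = G.dist v u := by
          simpa [SimpleGraph.Walk.length_cons] using hp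
        omega
  choose w hw using key
  have hcard : (Finset.univ.erase u).card ≤ G.edgeFinset.card := by
    apply Finset.card_le_card_of_injOn (fun v => s(v, w v))
    · intro a ha
      have ha' : a ≠ u := (Finset.mem_erase.mp ha).1
      simpa [SimpleGraph.mem_edgeFinset, SimpleGraph.mem_edgeSet] using (hw a ha').1
    · intro a ha b hb heq
      have ha' : a ≠ u := by simpa using ha
      have hb' : b ≠ u := by simpa using hb
      simp only [Sym2.eq_iff] at heq
      rcases heq with ⟨h1, h2⟩ | ⟨h1, h2⟩
      · exact h1
      · exfalso
        have d1 : G.dist (w a) u < G.dist a u := (hw a ha').2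
        have d2 : G.dist (w b) u < G.dist b u := (hw b hb').2
        rw [h2] at d1
        rw [← h1] at d2
        omega
  have : (Finset.univ.erase u).card = Fintype.card V - 1 := by
    rw [Finset.card_erase_of_mem (Finset.mem_univ u), Finset.card_univ]
  have hpos : 1 ≤ Fintype.card V := Fintype.card_pos_iff.mpr ⟨u⟩
  omega

set_option maxHeartbeats 1000000 in
/-- Let `p ≥ 3` be an integer and let `G` be a finite connected bipartite
simple graph with parts `A` and `B`, so that every edge of `G` joins a vertex of `A` to a
vertex of `B`, and assume no vertex of `G` has valency larger than `p`. Let `m` be the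
cardinality of `B` and `r` the number of endpoints of `G` lying in `B`. Then
`(p - 1)² * r ≤ p * (p - 2) * m + p`. -/
theorem endpoints_le_in_bipartite_graph_of_bounded_valency {V : Type*} [Fintype V]
    [DecidableEq V]
    (p : ℕ) (hp : 3 ≤ p)
    (G : SimpleGraph V) [DecidableRel G.Adj]
    (A B : Finset V) (hdisj : Disjoint A B) (hcover : A ∪ B = Finset.univ)
    (hbip : ∀ u v, G.Adj u v → (u ∈ A ∧ v ∈ B) ∨ (u ∈ B ∧ v ∈ A))
    (hconn : G.Connected) (hdeg : ∀ v, G.degree v ≤ p)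
    (m r : ℕ)
    (hm : m = B.card)
    (hr : r = (B.filter fun v => G.degree v = 1).card) :
    (p - 1) ^ 2 * r ≤ p * (p - 2) * m + p := by
  classical
  set n := A.card with hn
  set e := G.edgeFinset.card with he
  set s := (B.filter fun v => ¬ (G.degree v = 1)).card with hs
  -- vertex count
  have hnm : n + m = Fintype.card V := by
    rw [hn, hm, ← Finset.card_union_of_disjoint hdisj, hcover, Finset.card_univ]
  -- connectivity bound
  have h1 : n + m ≤ e + 1 := by rw [hnm]; exact aux_conn_card_le G hconn
  -- degree of a vertex in A counts neighbors in B, and vice versa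
  have hdegA : ∀ v ∈ A, G.degree v = (B.filter (G.Adj v)).card := by
    intro v hv
    rw [← SimpleGraph.card_neighborFinset_eq_degree]
    congr 1
    ext w
    simp only [SimpleGraph.mem_neighborFinset, Finset.mem_filter]
    constructor
    · intro hadj
      refine ⟨?_, hadj⟩
      rcases hbip v w hadj with ⟨_, hwB⟩ | ⟨hvB, _⟩
      · exact hwB
      · exact absurd hvB (Finset.disjoint_left.mp hdisj hv)
    · exact fun h => h.2
  have hdegB : ∀ v ∈ B, G.degree v = (A.filter (G.Adj v)).card := by
    intro v hv
    rw [← SimpleGraph.card_neighborFinset_eq_degree]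
    congr 1
    ext w
    simp only [SimpleGraph.mem_neighborFinset, Finset.mem_filter]
    constructor
    · intro hadj
      refine ⟨?_, hadj⟩
      rcases hbip v w hadj with ⟨hvA, _⟩ | ⟨_, hwA⟩
      · exact (Finset.disjoint_left.mp hdisj hvA hv).elim
      · exact hwA
    · exact fun h => h.2
  -- the two sides have equal degree sums
  have h3 : ∑ v ∈ A, G.degree v = ∑ v ∈ B, G.degree v := by
    rw [Finset.sum_congr rfl hdegA, Finset.sum_congr rfl hdegB]
    simp only [Finset.card_filter]
    rw [Finset.sum_comm]
    apply Finset.sum_congr rfl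
    intro b _
    apply Finset.sum_congr rfl
    intro a _
    simp [SimpleGraph.adj_comm]
  -- total degree sum
  have h4 : (∑ v ∈ A, G.degree v) + (∑ v ∈ B, G.degree v) = 2 * e := by
    rw [← Finset.sum_union hdisj, hcover, he]
    exact G.sum_degrees_eq_twice_card_edges
  have hA : ∑ v ∈ A, G.degree v = e := by omega
  have hB : ∑ v ∈ B, G.degree v = e := by omega
  -- bound from the A side
  have h5 : e ≤ p * n := by
    rw [← hA]
    calc ∑ v ∈ A, G.degree v ≤ ∑ _v ∈ A, p := Finset.sum_le_sum (fun v _ => hdeg v)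
    _ = p * n := by rw [Finset.sum_const, hn, smul_eq_mul, mul_comm]
  -- bound from the B side
  have h6 : e ≤ r + p * s := by
    rw [← hB, ← Finset.sum_filter_add_sum_filter_not B (fun v => G.degree v = 1)]
    have e1 : ∑ v ∈ B.filter (fun v => G.degree v = 1), G.degree v = r := by
      rw [hr, Finset.card_eq_sum_ones]
      apply Finset.sum_congr rfl
      intro v hv
      exact (Finset.mem_filter.mp hv).2
    have e2 : ∑ v ∈ B.filter (fun v => ¬ (G.degree v = 1)), G.degree v ≤ p * s := by
      calc ∑ v ∈ B.filter (fun v => ¬ (G.degree v = 1)), G.degree v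
          ≤ ∑ _v ∈ B.filter (fun v => ¬ (G.degree v = 1)), p :=
            Finset.sum_le_sum (fun v _ => hdeg v)
        _ = p * s := by rw [Finset.sum_const, hs, smul_eq_mul, mul_comm]
    omega
  have h7 : r + s = m := by
    rw [hr, hs, hm]
    exact Finset.card_filter_add_card_filter_not _
  -- arithmetic
  obtain ⟨t, rfl⟩ : ∃ t, p = t + 3 := ⟨p - 3, by omega⟩
  have hg1 : (t + 3) - 1 = t + 2 := by omega
  have hg2 : (t + 3) - 2 = t + 1 := by omega
  rw [hg1, hg2]
  -- n ≤ (t+2)*s + 1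
  have hA1 : n ≤ (t + 2) * s + 1 := by nlinarith
  have hB1 : m ≤ (t + 2) * n + 1 := by nlinarith
  have hC : m ≤ (t + 2) * ((t + 2) * s + 1) + 1 :=
    le_trans hB1 (by nlinarith)
  nlinarith [hC, h7]
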